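/- (Regularity integral estimate, from proof of Claim 4.8) Let a : [1,∞) → (0,∞) be a C^1 non-decreasing function, and for n ∈ ℕ set m_k = ∏_{j=1}^k a(j) (m_0 = 1). Suppose sup_{1≤s≤n} s·a'(s)/a(s) ≤ γ − 1 for some γ ≥ 1. Then for every 0 ≤ k < n: m_n^{k/n} / m_k ≤ e^{(n-k)(γ-1)}. -/

import Mathlib

open Set Finset

lemma log_fac_lb : ∀ k : ℕ, (k:ℝ) * Real.log k - k ≤ ∑ i ∈ Finset.Ioc 0 k, Real.log i := by
  intro k
  induction k with
  | zero => simp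
  | succ k ih =>
    rw [Finset.sum_Ioc_succ_top (Nat.zero_le _)]
    have key : (k:ℝ) * (Real.log (k+1) - Real.log k) ≤ 1 := by
      rcases Nat.eq_zero_or_pos k with h | h
      · simp [h]
      · have hk : (0:ℝ) < k := by exact_mod_cast h
        have h2 : Real.log (((k:ℝ)+1)/k) ≤ ((k:ℝ)+1)/k - 1 :=
          Real.log_le_sub_one_of_pos (by positivity)
        rw [Real.log_div (by positivity) (ne_of_gt hk)] at h2
        have h3 : ((k:ℝ)+1)/k - 1 = 1/k := by field_simp; ring
        rw [h3] at h2
        calc (k:ℝ) * (Real.log (k+1) - Real.log k) ≤ (k:ℝ) * (1/k) :=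
              mul_le_mul_of_nonneg_left h2 hk.le
          _ = 1 := by field_simp
    push_cast
    push_cast at ih
    nlinarith [key, ih]

lemma sum_log_ub (k n : ℕ) (hk : 1 ≤ k) (hkn : k ≤ n) :
    ∑ i ∈ Finset.Ioc 0 k, (Real.log n - Real.log i) ≤ n := by
  have hk0 : (0:ℝ) < k := by exact_mod_cast hk
  have hn0 : (0:ℝ) < n := by
    have h : (0:ℝ) < k := hk0
    have h2 : (k:ℝ) ≤ n := by exact_mod_cast hkn
    linarith
  have h1 : ∑ i ∈ Finset.Ioc 0 k, (Real.log n - Real.log i)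
      = k * Real.log n - ∑ i ∈ Finset.Ioc 0 k, Real.log i := by
    rw [Finset.sum_sub_distrib, Finset.sum_const, Nat.card_Ioc]
    simp
  rw [h1]
  have h2 := log_fac_lb k
  have h3 : Real.log n - Real.log k ≤ (n:ℝ)/k - 1 := by
    have := Real.log_le_sub_one_of_pos (show (0:ℝ) < (n:ℝ)/k by positivity)
    rwa [Real.log_div (ne_of_gt hn0) (ne_of_gt hk0)] at this
  have h4 : (k:ℝ) * (Real.log n - Real.log k) ≤ (n:ℝ) - k := by
    calc (k:ℝ) * (Real.log n - Real.log k) ≤ k * ((n:ℝ)/k - 1) :=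
          mul_le_mul_of_nonneg_left h3 hk0.le
      _ = (n:ℝ) - k := by field_simp
  nlinarith

lemma log_compare (a : ℝ → ℝ) (ha : ContDiffOn ℝ 1 a (Ici 1))
    (hapos : ∀ s ∈ Ici (1:ℝ), 0 < a s) (n : ℕ) (γ : ℝ)
    (hreg : ∀ s ∈ Icc (1:ℝ) n, s * derivWithin a (Ici 1) s / a s ≤ γ - 1) :
    ∀ x ∈ Icc (1:ℝ) n, ∀ y ∈ Icc (1:ℝ) n, x ≤ y →
      Real.log (a y) ≤ Real.log (a x) + (γ-1) * (Real.log y - Real.log x) := by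
  set f : ℝ → ℝ := fun s => Real.log (a s) - (γ-1) * Real.log s with hf
  have hderiv : ∀ x ∈ interior (Icc (1:ℝ) n),
      HasDerivAt f (deriv a x / a x - (γ-1) * x⁻¹) x := by
    intro x hx
    rw [interior_Icc] at hx
    have hx1 : (1:ℝ) < x := hx.1
    have hax : DifferentiableAt ℝ a x :=
      ((ha.differentiableOn one_ne_zero).differentiableAt (Ici_mem_nhds hx1))
    have h1 : HasDerivAt (fun s => Real.log (a s)) (deriv a x / a x) x :=
      hax.hasDerivAt.log (ne_of_gt (hapos x (le_of_lt hx1)))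
    have h2 : HasDerivAt (fun s => (γ-1) * Real.log s) ((γ-1) * x⁻¹) x :=
      (Real.hasDerivAt_log (by positivity)).const_mul (γ-1)
    exact h1.sub h2
  have hanti : AntitoneOn f (Icc (1:ℝ) n) := by
    apply antitoneOn_of_deriv_nonpos (convex_Icc _ _)
    · apply ContinuousOn.sub
      · apply ContinuousOn.log ((ha.continuousOn).mono Icc_subset_Ici_self)
        intro x hx; exact ne_of_gt (hapos x (Icc_subset_Ici_self hx))
      · exact continuousOn_const.mul
          (Real.continuousOn_log.mono (fun x hx => by
            simp only [mem_compl_iff, mem_singleton_iff]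
            have : (1:ℝ) ≤ x := hx.1
            intro h; rw [h] at this; linarith))
    · intro x hx
      exact (hderiv x hx).differentiableAt.differentiableWithinAt
    · intro x hx
      rw [(hderiv x hx).deriv]
      rw [interior_Icc] at hx
      have hx1 : (1:ℝ) < x := hx.1
      have hxI : x ∈ Icc (1:ℝ) n := ⟨hx1.le, hx.2.le⟩
      have hdw : derivWithin a (Ici 1) x = deriv a x :=
        derivWithin_of_mem_nhds (Ici_mem_nhds hx1)
      have hr := hreg x hxI
      rw [hdw] at hr
      have hax : 0 < a x := hapos x hx1.le
      have hx0 : (0:ℝ) < x := by linarith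
      have : deriv a x / a x ≤ (γ-1) / x := by
        rw [div_le_div_iff₀ hax hx0]
        have := (div_le_iff₀ hax).mp hr
        nlinarith
      have h2 : (γ-1) * x⁻¹ = (γ-1)/x := by ring
      linarith [this, h2 ▸ le_refl ((γ-1) * x⁻¹)]
  intro x hx y hy hxy
  have := hanti hx hy hxy
  simp only [hf] at this
  linarith

theorem regularity_integral_estimate (a : ℝ → ℝ)
    (ha : ContDiffOn ℝ 1 a (Ici 1)) (hapos : ∀ s ∈ Ici (1:ℝ), 0 < a s)
    (hamono : MonotoneOn a (Ici 1))
    (n : ℕ) (γ : ℝ) (hγ : 1 ≤ γ)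
    (hreg : ∀ s ∈ Icc (1:ℝ) n, s * derivWithin a (Ici 1) s / a s ≤ γ - 1)
    (m : ℕ → ℝ) (hm : ∀ k, m k = ∏ j ∈ Finset.Icc 1 k, a j) :
    ∀ k < n, (m n) ^ ((k : ℝ) / (n : ℝ)) / m k ≤
      Real.exp (((n : ℝ) - k) * (γ - 1)) := by
  intro k hkn
  have hn0 : 0 < n := by omega
  have hnR : (0:ℝ) < n := by exact_mod_cast hn0
  have hγ1 : (0:ℝ) ≤ γ - 1 := by linarith
  -- positivity and log of m
  have hjpos : ∀ j : ℕ, j ∈ Finset.Icc 1 n → (1:ℝ) ≤ (j:ℝ) := by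
    intro j hj
    have := (Finset.mem_Icc.mp hj).1
    exact_mod_cast this
  have hmpos : ∀ l : ℕ, 0 < m l := by
    intro l
    rw [hm]
    apply Finset.prod_pos
    intro j hj
    have h1 : 1 ≤ j := (Finset.mem_Icc.mp hj).1
    exact hapos j (by simp only [Set.mem_Ici]; exact_mod_cast h1)
  set L : ℕ → ℝ := fun j => Real.log (a j) with hL
  have hlog : ∀ l : ℕ, Real.log (m l) = ∑ j ∈ Finset.Ioc 0 l, L j := by
    intro l
    rw [hm, Real.log_prod]
    · rw [← Finset.Icc_add_one_left_eq_Ioc]; rfl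
    · intro j hj
      have h1 : 1 ≤ j := (Finset.mem_Icc.mp hj).1
      exact ne_of_gt (hapos j (by simp only [Set.mem_Ici]; exact_mod_cast h1))
  -- reduce to log inequality
  rw [Real.rpow_def_of_pos (hmpos n), ← Real.exp_log (hmpos k), ← Real.exp_sub,
    Real.exp_le_exp]
  rw [hlog, hlog]
  set Sn := ∑ j ∈ Finset.Ioc 0 n, L j with hSn
  set Sk := ∑ j ∈ Finset.Ioc 0 k, L j with hSk
  -- key inequality
  have key : (k:ℝ) * Sn - n * Sk ≤ n * (((n:ℝ) - k) * (γ - 1)) := by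
    rcases Nat.eq_zero_or_pos k with hk0 | hk1
    · subst hk0
      simp only [Nat.cast_zero, zero_mul, Finset.Ioc_self, Finset.sum_empty, mul_zero,
        sub_zero, zero_sub, neg_nonpos] at *
      have : (0:ℝ) ≤ ((n:ℝ) - 0) * (γ - 1) := by
        apply mul_nonneg _ hγ1
        simp only [sub_zero]
        positivity
      nlinarith
    · have hsplit : Sk + ∑ j ∈ Finset.Ioc k n, L j = Sn :=
        Finset.sum_Ioc_consecutive _ (Nat.zero_le k) (le_of_lt hkn)
      set T := ∑ j ∈ Finset.Ioc k n, L j with hT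
      have hcard1 : (Finset.Ioc 0 k).card = k := by rw [Nat.card_Ioc]; omega
      have hcard2 : (Finset.Ioc k n).card = n - k := by rw [Nat.card_Ioc]
      have hcast : ((n - k : ℕ):ℝ) = (n:ℝ) - k := by
        rw [Nat.cast_sub (le_of_lt hkn)]
      -- bound for each j in Ioc k n
      have hjb : ∀ j ∈ Finset.Ioc k n, (k:ℝ) * L j - Sk ≤ (n:ℝ) * (γ - 1) := by
        intro j hj
        obtain ⟨hj1, hj2⟩ := Finset.mem_Ioc.mp hj
        have hexp : (k:ℝ) * L j - Sk = ∑ i ∈ Finset.Ioc 0 k, (L j - L i) := by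
          rw [Finset.sum_sub_distrib, Finset.sum_const, hcard1]
          push_cast; ring
        rw [hexp]
        have hbound : ∀ i ∈ Finset.Ioc 0 k, L j - L i ≤ (γ-1) * (Real.log n - Real.log i) := by
          intro i hi
          obtain ⟨hi1, hi2⟩ := Finset.mem_Ioc.mp hi
          have hi1' : (1:ℝ) ≤ (i:ℝ) := by exact_mod_cast hi1
          have hij : i ≤ j := le_trans hi2 hj1.le
          have hiI : (i:ℝ) ∈ Set.Icc (1:ℝ) n := by
            constructor
            · exact_mod_cast hi1
            · exact_mod_cast le_trans hi2 (le_of_lt hkn)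
          have hjI : (j:ℝ) ∈ Set.Icc (1:ℝ) n := by
            constructor
            · have : 1 ≤ j := by omega
              exact_mod_cast this
            · exact_mod_cast hj2
          have hc := log_compare a ha hapos n γ hreg (i:ℝ) hiI (j:ℝ) hjI (by exact_mod_cast hij)
          have hlogj : Real.log (j:ℝ) ≤ Real.log (n:ℝ) := by
            apply Real.log_le_log (by exact_mod_cast Nat.lt_of_lt_of_le hi1 hij)
            exact_mod_cast hj2
          have : (γ-1) * (Real.log j - Real.log i) ≤ (γ-1) * (Real.log n - Real.log i) :=
            mul_le_mul_of_nonneg_left (by linarith) hγ1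
          simp only [hL]
          linarith
        calc ∑ i ∈ Finset.Ioc 0 k, (L j - L i)
            ≤ ∑ i ∈ Finset.Ioc 0 k, (γ-1) * (Real.log n - Real.log i) :=
              Finset.sum_le_sum hbound
          _ = (γ-1) * ∑ i ∈ Finset.Ioc 0 k, (Real.log n - Real.log i) := by
              rw [Finset.mul_sum]
          _ ≤ (γ-1) * n :=
              mul_le_mul_of_nonneg_left (sum_log_ub k n hk1 (le_of_lt hkn)) hγ1
          _ = (n:ℝ) * (γ-1) := by ring
      have hsum : ∑ j ∈ Finset.Ioc k n, ((k:ℝ) * L j - Sk) ≤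
          ∑ j ∈ Finset.Ioc k n, (n:ℝ) * (γ - 1) :=
        Finset.sum_le_sum hjb
      rw [Finset.sum_sub_distrib, ← Finset.mul_sum, Finset.sum_const, hcard2,
        Finset.sum_const, hcard2] at hsum
      have hlin : (k:ℝ) * Sn - n * Sk = (k:ℝ) * T - ((n:ℝ) - k) * Sk := by
        rw [← hsplit]; ring
      rw [hlin]
      calc (k:ℝ) * T - ((n:ℝ) - k) * Sk = (k:ℝ) * T - ((n-k:ℕ):ℝ) * Sk := by rw [hcast]
        _ ≤ ((n-k:ℕ):ℝ) * ((n:ℝ) * (γ-1)) := by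
            have := hsum; simpa [nsmul_eq_mul] using this
        _ = (n:ℝ) * (((n:ℝ) - k) * (γ - 1)) := by rw [hcast]; ring
  -- divide by n
  have : Sn * ((k:ℝ)/n) - Sk = ((k:ℝ) * Sn - n * Sk) / n := by field_simp
  rw [this]
  rw [div_le_iff₀ hnR]
  linarith [key]
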